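/- Let Y be a Poisson binomial random variable with mean μ = sum of its Bernoulli parameters, and let γ > 0 be fixed. Then (1+μ)^{-γ} ≤ E[(1+Y)^{-γ}], i.e., Jensen's inequality gives the lower bound; moreover, E[(1+Y)^{-γ}] ≤ (1+μ)^{-γ}(1 + O(sqrt(log μ / μ))) as μ → ∞. -/

import Mathlib

open Finset

noncomputable def pbExp (n : ℕ) (p : Fin n → ℝ) (h : ℕ → ℝ) : ℝ :=
  ∑ S ∈ (Finset.univ : Finset (Fin n)).powerset,
    (∏ i ∈ S, p i) * (∏ i ∈ Finset.univ \ S, (1 - p i)) * h S.card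

section pbE

variable {ι : Type*} [DecidableEq ι]

noncomputable def pbE (p : ι → ℝ) (s : Finset ι) (h : ℕ → ℝ) : ℝ :=
  ∑ S ∈ s.powerset, (∏ i ∈ S, p i) * (∏ i ∈ s \ S, (1 - p i)) * h S.card

lemma pbExp_eq (n : ℕ) (p : Fin n → ℝ) (h : ℕ → ℝ) :
    pbExp n p h = pbE p Finset.univ h := rfl

lemma pbE_empty (p : ι → ℝ) (h : ℕ → ℝ) : pbE p ∅ h = h 0 := by
  simp [pbE]

lemma pbE_insert (p : ι → ℝ) {a : ι} {s : Finset ι} (ha : a ∉ s) (h : ℕ → ℝ) :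
    pbE p (insert a s) h
      = p a * pbE p s (fun k => h (k + 1)) + (1 - p a) * pbE p s h := by
  have hdisj : Disjoint s.powerset (s.powerset.image (insert a)) := by
    rw [Finset.disjoint_left]
    intro S hS hS'
    simp only [Finset.mem_image, Finset.mem_powerset] at hS hS'
    obtain ⟨T, hT, rfl⟩ := hS'
    exact ha (hS (Finset.mem_insert_self a T))
  rw [pbE, Finset.powerset_insert, Finset.sum_union hdisj]
  have h2 : ∑ S ∈ s.powerset.image (insert a),
      (∏ i ∈ S, p i) * (∏ i ∈ insert a s \ S, (1 - p i)) * h S.card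
      = p a * pbE p s (fun k => h (k + 1)) := by
    rw [Finset.sum_image (fun S hS T hT hST => by
      simp only [Finset.mem_coe, Finset.mem_powerset] at hS hT
      have haS : a ∉ S := fun hmem => ha (hS hmem)
      have haT : a ∉ T := fun hmem => ha (hT hmem)
      rw [← Finset.erase_insert haS, ← Finset.erase_insert haT, hST])]
    rw [pbE, Finset.mul_sum]
    refine Finset.sum_congr rfl fun S hS => ?_
    simp only [Finset.mem_powerset] at hS
    have haS : a ∉ S := fun hmem => ha (hS hmem)
    rw [Finset.prod_insert haS, Finset.insert_sdiff_insert, Finset.sdiff_insert_of_notMem ha,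
      Finset.card_insert_of_notMem haS]
    ring
  have h1 : ∑ S ∈ s.powerset,
      (∏ i ∈ S, p i) * (∏ i ∈ insert a s \ S, (1 - p i)) * h S.card
      = (1 - p a) * pbE p s h := by
    rw [pbE, Finset.mul_sum]
    refine Finset.sum_congr rfl fun S hS => ?_
    simp only [Finset.mem_powerset] at hS
    have haS : a ∉ S := fun hmem => ha (hS hmem)
    have haSd : a ∉ s \ S := by simp [ha]
    rw [Finset.insert_sdiff_of_notMem _ haS, Finset.prod_insert haSd]
    ring
  rw [h1, h2, add_comm]

lemma pbE_mono (p : ι → ℝ) (s : Finset ι) (hp : ∀ i, p i ∈ Set.Icc (0:ℝ) 1)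
    {h1 h2 : ℕ → ℝ} (hle : ∀ k, h1 k ≤ h2 k) : pbE p s h1 ≤ pbE p s h2 := by
  refine Finset.sum_le_sum fun S _ => ?_
  have hw : 0 ≤ (∏ i ∈ S, p i) * ∏ i ∈ s \ S, (1 - p i) :=
    mul_nonneg (Finset.prod_nonneg fun i _ => (hp i).1)
      (Finset.prod_nonneg fun i _ => by linarith [(hp i).2])
  calc (∏ i ∈ S, p i) * (∏ i ∈ s \ S, (1 - p i)) * h1 S.card
      ≤ (∏ i ∈ S, p i) * (∏ i ∈ s \ S, (1 - p i)) * h2 S.card :=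
        mul_le_mul_of_nonneg_left (hle S.card) hw

lemma pbE_const (p : ι → ℝ) (s : Finset ι) (c : ℝ) : pbE p s (fun _ => c) = c := by
  induction s using Finset.induction_on with
  | empty => simp [pbE_empty]
  | insert _ _ ha ih => rw [pbE_insert _ ha]; simp only [ih]; ring

lemma pbE_add (p : ι → ℝ) (s : Finset ι) (h1 h2 : ℕ → ℝ) :
    pbE p s (fun k => h1 k + h2 k) = pbE p s h1 + pbE p s h2 := by
  simp only [pbE, mul_add, Finset.sum_add_distrib]

lemma pbE_smul (p : ι → ℝ) (s : Finset ι) (c : ℝ) (h : ℕ → ℝ) :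
    pbE p s (fun k => c * h k) = c * pbE p s h := by
  simp only [pbE, Finset.mul_sum]
  exact Finset.sum_congr rfl fun S _ => by ring

lemma pbE_pow (p : ι → ℝ) (s : Finset ι) (t : ℝ) :
    pbE p s (fun k => t ^ k) = ∏ i ∈ s, (1 - p i + p i * t) := by
  induction s using Finset.induction_on with
  | empty => simp [pbE_empty]
  | @insert a s ha ih =>
    rw [pbE_insert _ ha, Finset.prod_insert ha]
    have : pbE p s (fun k => t ^ (k + 1)) = t * pbE p s (fun k => t ^ k) := by
      rw [← pbE_smul]
      exact congrArg _ (funext fun k => by ring)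
    rw [this, ih]
    ring

end pbE

section Convexity

lemma convexOn_rpow_neg {γ : ℝ} (hγ : 0 < γ) :
    ConvexOn ℝ (Set.Ioi (0:ℝ)) (fun x : ℝ => x ^ (-γ)) := by
  have hint : interior (Set.Ioi (0:ℝ)) = Set.Ioi 0 := interior_Ioi
  refine convexOn_of_hasDerivWithinAt2_nonneg (convex_Ioi 0)
    (f' := fun x => -γ * x ^ (-γ - 1)) (f'' := fun x => (-γ) * (-γ-1) * x ^ (-γ - 2)) ?_ ?_ ?_ ?_
  · exact (continuousOn_id.rpow_const (fun x hx => Or.inl (ne_of_gt hx)))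
  · intro x hx
    rw [hint] at hx
    have h := Real.hasDerivAt_rpow_const (p := -γ) (Or.inl (ne_of_gt hx))
    exact (h.congr_deriv (by ring)).hasDerivWithinAt
  · intro x hx
    rw [hint] at hx
    have h := ((Real.hasDerivAt_rpow_const (p := -γ - 1)
      (Or.inl (ne_of_gt hx))).const_mul (-γ))
    refine (h.congr_deriv ?_).hasDerivWithinAt
    ring_nf
  · intro x hx
    rw [hint] at hx
    have : (0:ℝ) ≤ x ^ (-γ - 2) := Real.rpow_nonneg (le_of_lt hx) _
    have h1 : (0:ℝ) ≤ -γ * (-γ-1) := by nlinarith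
    simpa using mul_nonneg h1 this

lemma convexOn_shift {f : ℝ → ℝ} {c : ℝ} (hc : 0 < c)
    (hf : ConvexOn ℝ (Set.Ioi (0:ℝ)) f) :
    ConvexOn ℝ (Set.Ici (0:ℝ)) (fun y => f (c + y)) := by
  refine ⟨convex_Ici 0, fun x hx y hy a b ha hb hab => ?_⟩
  simp only [smul_eq_mul]
  have hx' : c + x ∈ Set.Ioi (0:ℝ) := by
    simp only [Set.mem_Ici] at hx; simp only [Set.mem_Ioi]; linarith
  have hy' : c + y ∈ Set.Ioi (0:ℝ) := by
    simp only [Set.mem_Ici] at hy; simp only [Set.mem_Ioi]; linarith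
  have h := hf.2 hx' hy' ha hb hab
  simp only [smul_eq_mul] at h
  have heq : a * (c + x) + b * (c + y) = c + (a * x + b * y) := by
    rw [show a * (c + x) + b * (c + y) = (a + b) * c + (a * x + b * y) from by ring, hab,
      one_mul]
  rwa [heq] at h

lemma convexOn_shift1 {f : ℝ → ℝ} (hf : ConvexOn ℝ (Set.Ici (0:ℝ)) f) :
    ConvexOn ℝ (Set.Ici (0:ℝ)) (fun y => f (1 + y)) := by
  refine ⟨convex_Ici 0, fun x hx y hy a b ha hb hab => ?_⟩
  simp only [smul_eq_mul]
  have hx' : 1 + x ∈ Set.Ici (0:ℝ) := by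
    simp only [Set.mem_Ici] at hx ⊢; linarith
  have hy' : 1 + y ∈ Set.Ici (0:ℝ) := by
    simp only [Set.mem_Ici] at hy ⊢; linarith
  have h := hf.2 hx' hy' ha hb hab
  simp only [smul_eq_mul] at h
  have heq : a * (1 + x) + b * (1 + y) = 1 + (a * x + b * y) := by
    rw [show a * (1 + x) + b * (1 + y) = (a + b) * 1 + (a * x + b * y) from by ring, hab,
      one_mul]
  rwa [heq] at h

end Convexity

section Jensen

variable {ι : Type*} [DecidableEq ι]

lemma pbE_jensen (p : ι → ℝ) (s : Finset ι) (hp : ∀ i, p i ∈ Set.Icc (0:ℝ) 1) :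
    ∀ f : ℝ → ℝ, ConvexOn ℝ (Set.Ici (0:ℝ)) f →
      f (∑ i ∈ s, p i) ≤ pbE p s (fun k => f k) := by
  induction s using Finset.induction_on with
  | empty => intro f _; simp [pbE_empty]
  | @insert a s ha ih =>
    intro f hf
    have hμ : (0:ℝ) ≤ ∑ i ∈ s, p i := Finset.sum_nonneg fun i _ => (hp i).1
    have hpa := hp a
    rw [Finset.sum_insert ha, pbE_insert _ ha]
    have h1 : f (1 + ∑ i ∈ s, p i) ≤ pbE p s (fun k => f (1 + (k:ℝ))) :=
      ih (fun y => f (1 + y)) (convexOn_shift1 hf)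
    have hcast : pbE p s (fun k => f (((k + 1 : ℕ)):ℝ)) = pbE p s (fun k => f (1 + (k:ℝ))) := by
      rw [show (fun k : ℕ => f (((k + 1 : ℕ)):ℝ)) = fun k : ℕ => f (1 + (k:ℝ)) from by
        funext k; push_cast; rw [add_comm]]
    have h2 : f (∑ i ∈ s, p i) ≤ pbE p s (fun k => f (k:ℝ)) := ih f hf
    have hconv : f (p a + ∑ i ∈ s, p i)
        ≤ p a * f (1 + ∑ i ∈ s, p i) + (1 - p a) * f (∑ i ∈ s, p i) := by
      have h := hf.2 (show (1 + ∑ i ∈ s, p i) ∈ Set.Ici (0:ℝ) by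
          simp only [Set.mem_Ici]; linarith)
        (show (∑ i ∈ s, p i) ∈ Set.Ici (0:ℝ) from hμ) hpa.1 (sub_nonneg.mpr hpa.2)
        (by ring : p a + (1 - p a) = 1)
      simp only [smul_eq_mul] at h
      have : p a * (1 + ∑ i ∈ s, p i) + (1 - p a) * (∑ i ∈ s, p i)
          = p a + ∑ i ∈ s, p i := by ring
      rwa [this] at h
    calc f (p a + ∑ i ∈ s, p i)
        ≤ p a * f (1 + ∑ i ∈ s, p i) + (1 - p a) * f (∑ i ∈ s, p i) := hconv
      _ ≤ p a * pbE p s (fun k => f (1 + (k:ℝ))) + (1 - p a) * pbE p s (fun k => f (k:ℝ)) := by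
          have h3 : 0 ≤ 1 - p a := sub_nonneg.mpr hpa.2
          have h4 := hpa.1
          exact add_le_add (mul_le_mul_of_nonneg_left h1 h4)
            (mul_le_mul_of_nonneg_left h2 h3)
      _ = p a * pbE p s (fun k => f (((k + 1 : ℕ)):ℝ)) + (1 - p a) * pbE p s (fun k => f (k:ℝ)) := by
          rw [hcast]

end Jensen

section Analytic

lemma exp_quad {x : ℝ} (hx : x ≤ 0) : Real.exp x ≤ 1 + x + x ^ 2 / 2 := by
  set F : ℝ → ℝ := fun y => 1 + y + y ^ 2 / 2 - Real.exp y with hF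
  have hderiv : ∀ y : ℝ, HasDerivAt F (1 + y - Real.exp y) y := by
    intro y
    have h1 : HasDerivAt (fun y : ℝ => 1 + y) 1 y :=
      (hasDerivAt_id y).const_add 1
    have h2 : HasDerivAt (fun y : ℝ => y ^ 2 / 2) y y := by
      simpa using (hasDerivAt_pow 2 y).div_const 2
    have h3 := ((h1.add h2).sub (Real.hasDerivAt_exp y))
    exact h3
  have hanti : AntitoneOn F (Set.Iic 0) := by
    refine antitoneOn_of_deriv_nonpos (convex_Iic 0) ?_ ?_ ?_
    · exact (Continuous.continuousOn (by continuity))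
    · intro y hy
      exact (hderiv y).differentiableAt.differentiableWithinAt
    · intro y hy
      rw [(hderiv y).deriv]
      have := Real.add_one_le_exp y
      linarith
  have h0 : F 0 = 0 := by simp [hF]
  have := hanti (Set.mem_Iic.mpr hx) (Set.mem_Iic.mpr le_rfl) hx
  rw [h0] at this
  simp only [hF] at this
  linarith

lemma exp_le_one_add_mul_exp {u c : ℝ} (hu : 0 ≤ u) (huc : u ≤ c) :
    Real.exp u ≤ 1 + u * Real.exp c := by
  have h1 : 1 - u ≤ Real.exp (-u) := by
    have := Real.add_one_le_exp (-u); linarith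
  have h2 : Real.exp u * (1 - u) ≤ 1 := by
    calc Real.exp u * (1 - u) ≤ Real.exp u * Real.exp (-u) :=
          mul_le_mul_of_nonneg_left h1 (le_of_lt (Real.exp_pos u))
      _ = 1 := by rw [← Real.exp_add]; simp
  have h3 : Real.exp u ≤ 1 + u * Real.exp u := by nlinarith
  have h4 : u * Real.exp u ≤ u * Real.exp c :=
    mul_le_mul_of_nonneg_left (Real.exp_le_exp.mpr huc) hu
  linarith

lemma log_le_two_sqrt {x : ℝ} (hx : 1 ≤ x) : Real.log x ≤ 2 * Real.sqrt x := by
  have hx0 : (0:ℝ) < x := by linarith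
  have h1 : Real.log (Real.sqrt x) ≤ Real.sqrt x - 1 :=
    Real.log_le_sub_one_of_pos (Real.sqrt_pos.mpr hx0)
  have h2 : Real.log (Real.sqrt x) = Real.log x / 2 := Real.log_sqrt (le_of_lt hx0)
  have h3 : (0:ℝ) ≤ Real.sqrt x := Real.sqrt_nonneg x
  linarith

end Analytic

set_option maxHeartbeats 2000000 in
theorem stmt11 (γ : ℝ) (hγ : 0 < γ) :
    (∀ (n : ℕ) (p : Fin n → ℝ), (∀ i, p i ∈ Set.Icc (0 : ℝ) 1) →
      (1 + ∑ i, p i) ^ (-γ) ≤ pbExp n p (fun y => (1 + (y : ℝ)) ^ (-γ))) ∧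
    ∃ C M : ℝ, 0 < C ∧ ∀ (n : ℕ) (p : Fin n → ℝ), (∀ i, p i ∈ Set.Icc (0 : ℝ) 1) →
      M ≤ ∑ i, p i →
      pbExp n p (fun y => (1 + (y : ℝ)) ^ (-γ)) ≤
        (1 + ∑ i, p i) ^ (-γ) *
          (1 + C * Real.sqrt (Real.log (∑ i, p i) / (∑ i, p i))) := by
  constructor
  · -- Part 1: Jensen
    intro n p hp
    rw [pbExp_eq]
    exact pbE_jensen p Finset.univ hp (fun y => (1 + y) ^ (-γ))
      (convexOn_shift one_pos (convexOn_rpow_neg hγ))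
  · -- Part 2
    refine ⟨2 * γ * Real.exp γ * Real.sqrt (2 * (γ + 1)) + (2:ℝ) ^ γ,
      max (Real.exp 1) ((16 * (γ + 1)) ^ 2), ?_, ?_⟩
    · have h1 : (0:ℝ) < (2:ℝ) ^ γ := Real.rpow_pos_of_pos (by norm_num) γ
      have h2 : (0:ℝ) ≤ 2 * γ * Real.exp γ * Real.sqrt (2 * (γ + 1)) := by positivity
      linarith
    intro n p hp hM
    set μ : ℝ := ∑ i, p i with hμdef
    clear_value μ
    have hMe : Real.exp 1 ≤ μ := le_trans (le_max_left _ _) hM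
    have hMsq : (16 * (γ + 1)) ^ 2 ≤ μ := le_trans (le_max_right _ _) hM
    have hμ1 : (1:ℝ) ≤ μ := le_trans (by
      have := Real.add_one_le_exp (1:ℝ); linarith) hMe
    have hμ0 : (0:ℝ) < μ := by linarith
    set L : ℝ := Real.log μ with hLdef
    clear_value L
    have hL1 : (1:ℝ) ≤ L := by
      rw [hLdef, ← Real.log_exp 1]
      exact Real.log_le_log (Real.exp_pos 1) hMe
    have hL0 : (0:ℝ) < L := by linarith
    have hsqμ : 16 * (γ + 1) ≤ Real.sqrt μ := by
      have := Real.sqrt_le_sqrt hMsq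
      rwa [Real.sqrt_sq (by positivity : (0:ℝ) ≤ 16 * (γ + 1))] at this
    have hsqμsq : Real.sqrt μ * Real.sqrt μ = μ := Real.mul_self_sqrt hμ0.le
    set δ : ℝ := Real.sqrt (2 * (γ + 1) * μ * L) with hδdef
    clear_value δ
    have hδ0 : (0:ℝ) ≤ δ := by rw [hδdef]; exact Real.sqrt_nonneg _
    have hδsq : δ ^ 2 = 2 * (γ + 1) * μ * L := by rw [hδdef]; exact Real.sq_sqrt (by positivity)
    have hLsq : L ≤ 2 * Real.sqrt μ := by rw [hLdef]; exact log_le_two_sqrt hμ1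
    have hδμ2 : δ ≤ μ / 2 := by
      have harg : 2 * (γ + 1) * μ * L ≤ (μ / 2) ^ 2 := by
        have h1 : 2 * (γ + 1) * L ≤ 4 * (γ + 1) * Real.sqrt μ := by nlinarith
        have h2 : 4 * (γ + 1) * Real.sqrt μ ≤ μ / 4 := by nlinarith
        nlinarith
      have h := Real.sqrt_le_sqrt harg
      rw [Real.sqrt_sq (by positivity : (0:ℝ) ≤ μ / 2)] at h
      rw [hδdef]; exact h
    set a : ℝ := μ - δ with hadef
    clear_value a
    have ha2 : μ / 2 ≤ a := by rw [hadef]; linarith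
    have ha0 : (0:ℝ) < a := by linarith
    set ss : ℝ := -(δ / μ) with hssdef
    clear_value ss
    have hss0 : ss ≤ 0 := by
      rw [hssdef]
      have : 0 ≤ δ / μ := div_nonneg hδ0 hμ0.le
      linarith
    set t : ℝ := Real.exp ss with htdef
    clear_value t
    have ht0 : (0:ℝ) < t := by rw [htdef]; exact Real.exp_pos ss
    have ht1 : t ≤ 1 := by rw [htdef]; exact Real.exp_le_one_iff.mpr hss0
    have hB0 : (0:ℝ) ≤ Real.exp (-(ss * a)) := (Real.exp_pos _).le
    -- Step A : pointwise bound
    have hpoint : ∀ k : ℕ, (1 + (k:ℝ)) ^ (-γ)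
        ≤ (1 + a) ^ (-γ) + Real.exp (-(ss * a)) * t ^ k := by
      intro k
      have hkey : Real.exp (-(ss * a)) * t ^ k = Real.exp (ss * ((k:ℝ) - a)) := by
        rw [htdef, ← Real.exp_nat_mul, ← Real.exp_add]
        ring_nf
      rcases le_or_gt a (k:ℝ) with hak | hka
      · have h1 : (1 + (k:ℝ)) ^ (-γ) ≤ (1 + a) ^ (-γ) :=
          Real.rpow_le_rpow_of_nonpos (by linarith) (by linarith) (by linarith)
        have h2 : (0:ℝ) ≤ Real.exp (-(ss * a)) * t ^ k := by positivity
        linarith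
      · have h1 : (1 + (k:ℝ)) ^ (-γ) ≤ 1 := by
          refine Real.rpow_le_one_of_one_le_of_nonpos ?_ (by linarith)
          have : (0:ℝ) ≤ (k:ℝ) := Nat.cast_nonneg k
          linarith
        have h2 : (1:ℝ) ≤ Real.exp (ss * ((k:ℝ) - a)) := by
          refine Real.one_le_exp ?_
          nlinarith [hss0, (show (k:ℝ) - a ≤ 0 by linarith)]
        have h3 : (0:ℝ) ≤ (1 + a) ^ (-γ) := Real.rpow_nonneg (by linarith) _
        rw [hkey]
        linarith
    -- Step B : expectation bound
    have hstepB : pbE p Finset.univ (fun y => (1 + (y:ℝ)) ^ (-γ))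
        ≤ (1 + a) ^ (-γ) + Real.exp (-(ss * a)) * ∏ i, (1 - p i + p i * t) := by
      calc pbE p Finset.univ (fun y => (1 + (y:ℝ)) ^ (-γ))
          ≤ pbE p Finset.univ (fun k => (1 + a) ^ (-γ) + Real.exp (-(ss * a)) * t ^ k) :=
            pbE_mono p _ hp hpoint
        _ = (1 + a) ^ (-γ) + Real.exp (-(ss * a)) * ∏ i, (1 - p i + p i * t) := by
            rw [pbE_add p _ (fun _ => (1 + a) ^ (-γ)) (fun k => Real.exp (-(ss * a)) * t ^ k),
              pbE_const, pbE_smul, pbE_pow]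
    -- Step C : product bound
    have hstepC : ∏ i, (1 - p i + p i * t) ≤ Real.exp (μ * (t - 1)) := by
      have h1 : ∏ i, (1 - p i + p i * t) ≤ ∏ i, Real.exp (p i * (t - 1)) := by
        refine Finset.prod_le_prod (fun i _ => ?_) (fun i _ => ?_)
        · have h := (hp i).1
          have h' := (hp i).2
          nlinarith
        · have := Real.add_one_le_exp (p i * (t - 1))
          linarith
      have h2 : ∏ i, Real.exp (p i * (t - 1)) = Real.exp (μ * (t - 1)) := by
        rw [← Real.exp_sum, ← Finset.sum_mul, ← hμdef]
      linarith [h1, le_of_eq h2]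
    -- Step D : exponent computation
    have hstepD : Real.exp (-(ss * a)) * Real.exp (μ * (t - 1)) ≤ μ ^ (-(γ + 1)) := by
      rw [← Real.exp_add]
      have hquad : t - 1 ≤ ss + ss ^ 2 / 2 := by
        have := exp_quad hss0
        rw [htdef]
        linarith
      have h1 : -(ss * a) + μ * (t - 1) ≤ -(ss * a) + μ * (ss + ss ^ 2 / 2) := by
        have := mul_le_mul_of_nonneg_left hquad hμ0.le
        linarith
      have h2 : -(ss * a) + μ * (ss + ss ^ 2 / 2) = -(δ ^ 2 / (2 * μ)) := by
        rw [hssdef, hadef]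
        field_simp
        ring
      have h3 : -(δ ^ 2 / (2 * μ)) = -(γ + 1) * L := by
        rw [hδsq]
        field_simp
      have h4 : Real.exp (-(ss * a) + μ * (t - 1)) ≤ Real.exp (-(γ + 1) * L) := by
        apply Real.exp_le_exp.mpr
        rw [← h3, ← h2]; exact h1
      have h5 : Real.exp (-(γ + 1) * L) = μ ^ (-(γ + 1)) := by
        rw [Real.rpow_def_of_pos hμ0, hLdef]
        ring_nf
      linarith [h4, le_of_eq h5]
    -- combine B, C, D
    have hE : pbE p Finset.univ (fun y => (1 + (y:ℝ)) ^ (-γ))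
        ≤ (1 + a) ^ (-γ) + μ ^ (-(γ + 1)) := by
      have h1 : Real.exp (-(ss * a)) * ∏ i, (1 - p i + p i * t)
          ≤ Real.exp (-(ss * a)) * Real.exp (μ * (t - 1)) :=
        mul_le_mul_of_nonneg_left hstepC hB0
      linarith [hstepB, h1, hstepD]
    -- Step G : δ / μ in terms of sqrt (L / μ)
    set R : ℝ := Real.sqrt (L / μ) with hRdef
    clear_value R
    have hR0 : (0:ℝ) ≤ R := by rw [hRdef]; exact Real.sqrt_nonneg _
    have hstepG : δ / μ = Real.sqrt (2 * (γ + 1)) * R := by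
      have hsq : (Real.sqrt (2 * (γ + 1)) * R * μ) ^ 2 = 2 * (γ + 1) * μ * L := by
        rw [mul_pow, mul_pow, Real.sq_sqrt (by positivity : (0:ℝ) ≤ 2 * (γ + 1)), hRdef,
          Real.sq_sqrt (div_nonneg hL0.le hμ0.le)]
        field_simp
      have h1 : δ = Real.sqrt (2 * (γ + 1)) * R * μ := by
        rw [hδdef, ← hsq, Real.sqrt_sq (by positivity)]
      rw [h1]
      field_simp
    -- Step F : (1 + a)^(-γ) bound
    have hstepF : (1 + a) ^ (-γ)
        ≤ (1 + μ) ^ (-γ) * (1 + 2 * γ * Real.exp γ * (δ / μ)) := by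
      set x : ℝ := δ / (1 + μ) with hxdef
      clear_value x
      have hx0 : (0:ℝ) ≤ x := by
        rw [hxdef]; positivity
      have hx2 : x ≤ 1 / 2 := by
        rw [hxdef, div_le_iff₀ (by linarith : (0:ℝ) < 1 + μ)]
        linarith
      have h1x0 : (0:ℝ) < 1 - x := by linarith
      have hx' : x * (1 + μ) = δ := by
        rw [hxdef, div_mul_cancel₀ _ (by positivity : (0:ℝ) < 1 + μ).ne']
      have h1a : 1 + a = (1 + μ) * (1 - x) := by
        rw [hadef]; linear_combination hx'
      have hμpos' : (0:ℝ) ≤ 1 + μ := by linarith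
      have hsplit : (1 + a) ^ (-γ) = (1 + μ) ^ (-γ) * (1 - x) ^ (-γ) := by
        rw [h1a, Real.mul_rpow hμpos' h1x0.le]
      have hlog : -Real.log (1 - x) ≤ 2 * x := by
        have hinv : Real.log (1 - x)⁻¹ ≤ (1 - x)⁻¹ - 1 :=
          Real.log_le_sub_one_of_pos (by positivity)
        have hinv2 : (1 - x)⁻¹ ≤ 1 + 2 * x := by
          have hm : (1:ℝ) ≤ (1 + 2 * x) * (1 - x) := by nlinarith
          calc (1 - x)⁻¹ = 1 / (1 - x) := (one_div _).symm
            _ ≤ 1 + 2 * x := by rw [div_le_iff₀ h1x0]; linarith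
        rw [Real.log_inv] at hinv
        linarith
      have hrx : (1 - x) ^ (-γ) ≤ Real.exp (2 * γ * x) := by
        rw [Real.rpow_def_of_pos h1x0]
        apply Real.exp_le_exp.mpr
        have : Real.log (1 - x) * (-γ) = γ * (-Real.log (1 - x)) := by ring
        rw [this]
        have := mul_le_mul_of_nonneg_left hlog hγ.le
        linarith
      have hexp : Real.exp (2 * γ * x) ≤ 1 + 2 * γ * x * Real.exp γ := by
        refine exp_le_one_add_mul_exp (by positivity) ?_
        nlinarith
      have hxle : x ≤ δ / μ := by
        rw [hxdef]
        gcongr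
        linarith
      have hfinal : (1 - x) ^ (-γ) ≤ 1 + 2 * γ * Real.exp γ * (δ / μ) := by
        have h1 : 2 * γ * x * Real.exp γ ≤ 2 * γ * Real.exp γ * (δ / μ) := by
          have := mul_le_mul_of_nonneg_left hxle (by positivity : (0:ℝ) ≤ 2 * γ * Real.exp γ)
          nlinarith [Real.exp_pos γ]
        linarith [hrx, hexp]
      rw [hsplit]
      exact mul_le_mul_of_nonneg_left hfinal (Real.rpow_nonneg (by linarith) _)
    -- Step H : μ^(-(γ+1)) bound
    have hstepH : μ ^ (-(γ + 1)) ≤ (1 + μ) ^ (-γ) * ((2:ℝ) ^ γ * R) := by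
      have hsplit : μ ^ (-(γ + 1)) = μ ^ (-γ) * μ ^ (-(1:ℝ)) := by
        rw [← Real.rpow_add hμ0]
        ring_nf
      have hh1 : μ ^ (-γ) ≤ (2:ℝ) ^ γ * (1 + μ) ^ (-γ) := by
        have hhalf : (1 + μ) / 2 ≤ μ := by linarith
        have hhalf0 : (0:ℝ) < (1 + μ) / 2 := by linarith
        have h1 : ((1 + μ) / 2) ^ γ ≤ μ ^ γ :=
          Real.rpow_le_rpow hhalf0.le hhalf hγ.le
        have h2 : (μ ^ γ)⁻¹ ≤ (((1 + μ) / 2) ^ γ)⁻¹ := by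
          apply inv_anti₀ (Real.rpow_pos_of_pos hhalf0 γ) h1
        have h3 : (((1 + μ) / 2) ^ γ)⁻¹ = (2:ℝ) ^ γ * ((1 + μ) ^ γ)⁻¹ := by
          rw [Real.div_rpow (by linarith) (by norm_num : (0:ℝ) ≤ 2)]
          rw [inv_div]
          rw [div_eq_mul_inv]
        rw [Real.rpow_neg hμ0.le, Real.rpow_neg (by linarith : (0:ℝ) ≤ 1 + μ)]
        rw [h3] at h2
        exact h2
      have hh2 : μ ^ (-(1:ℝ)) ≤ R := by
        rw [Real.rpow_neg_one, hRdef]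
        have h1 : μ⁻¹ = Real.sqrt (μ⁻¹ ^ 2) := by
          rw [Real.sqrt_sq (by positivity)]
        rw [h1]
        apply Real.sqrt_le_sqrt
        rw [div_eq_mul_inv]
        have hinvμ : μ⁻¹ ≤ 1 := by
          rw [inv_le_one_iff₀]; right; exact hμ1
        have hinvL : μ⁻¹ ≤ L := le_trans hinvμ hL1
        calc μ⁻¹ ^ 2 = μ⁻¹ * μ⁻¹ := sq μ⁻¹
          _ ≤ L * μ⁻¹ := mul_le_mul_of_nonneg_right hinvL (by positivity)
      calc μ ^ (-(γ + 1)) = μ ^ (-γ) * μ ^ (-(1:ℝ)) := hsplit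
        _ ≤ ((2:ℝ) ^ γ * (1 + μ) ^ (-γ)) * R := by
            apply mul_le_mul hh1 hh2 (Real.rpow_nonneg hμ0.le _) (by positivity)
        _ = (1 + μ) ^ (-γ) * ((2:ℝ) ^ γ * R) := by ring
    -- final assembly
    rw [pbExp_eq]
    have hsum : pbE p Finset.univ (fun y => (1 + (y:ℝ)) ^ (-γ))
        ≤ (1 + μ) ^ (-γ) * (1 + 2 * γ * Real.exp γ * (δ / μ))
          + (1 + μ) ^ (-γ) * ((2:ℝ) ^ γ * R) := by
      linarith [hE, hstepF, hstepH]
    calc pbE p Finset.univ (fun y => (1 + (y:ℝ)) ^ (-γ))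
        ≤ (1 + μ) ^ (-γ) * (1 + 2 * γ * Real.exp γ * (δ / μ))
          + (1 + μ) ^ (-γ) * ((2:ℝ) ^ γ * R) := hsum
      _ = (1 + μ) ^ (-γ) *
          (1 + (2 * γ * Real.exp γ * Real.sqrt (2 * (γ + 1)) + (2:ℝ) ^ γ) * R) := by
          rw [show 2 * γ * Real.exp γ * (δ / μ)
              = 2 * γ * Real.exp γ * (Real.sqrt (2 * (γ + 1)) * R) from by rw [hstepG]]
          ring
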